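/- For all vectors y, z ∈ ℝ^d and any real r ≥ 1, one has ⟨|y|^{r-1} y − |z|^{r-1} z, y − z⟩ ≥ (1/2) |y|^{r-1} |y − z|^2 + (1/2) |z|^{r-1} |y − z|^2. -/

import Mathlib

theorem stmt_2 (d : ℕ) (r : ℝ) (hr : 1 ≤ r) (y z : EuclideanSpace ℝ (Fin d)) :
    (1 / 2) * ‖y‖ ^ (r - 1) * ‖y - z‖ ^ 2 + (1 / 2) * ‖z‖ ^ (r - 1) * ‖y - z‖ ^ 2 ≤
      (inner ℝ ((‖y‖ ^ (r - 1)) • y - (‖z‖ ^ (r - 1)) • z) (y - z) : ℝ) := by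
  set a := ‖y‖ ^ (r - 1) with ha
  set b := ‖z‖ ^ (r - 1) with hb
  have hkey : 0 ≤ (a - b) * (‖y‖ ^ 2 - ‖z‖ ^ 2) := by
    rcases le_total ‖y‖ ‖z‖ with h | h
    · have h1 : a ≤ b := Real.rpow_le_rpow (norm_nonneg y) h (by linarith)
      have h2 : ‖y‖ ^ 2 ≤ ‖z‖ ^ 2 := pow_le_pow_left₀ (norm_nonneg y) h 2
      nlinarith
    · have h1 : b ≤ a := Real.rpow_le_rpow (norm_nonneg z) h (by linarith)
      have h2 : ‖z‖ ^ 2 ≤ ‖y‖ ^ 2 := pow_le_pow_left₀ (norm_nonneg z) h 2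
      nlinarith
  have hsq : ‖y - z‖ ^ 2 = ‖y‖ ^ 2 - 2 * (inner ℝ z y : ℝ) + ‖z‖ ^ 2 := by
    rw [real_inner_comm]; exact norm_sub_sq_real y z
  rw [inner_sub_right, inner_sub_left, inner_sub_left, real_inner_smul_left,
    real_inner_smul_left, real_inner_smul_left, real_inner_smul_left,
    real_inner_self_eq_norm_sq, real_inner_self_eq_norm_sq, real_inner_comm z y]
  rw [hsq]
  nlinarith [hkey]
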